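/- If a real number t satisfies t ≥ e^{-C} and t < δ(1 + C + ln t), where δ and C are real constants with δ > e^{-C}, then t ≤ (1 + e^{-1})·δ·(C + ln((1+e)·δ)). -/

import Mathlib

theorem perceptron_dynamic_margin_lemma (t δ C : ℝ)
    (hδ : δ > Real.exp (-C))
    (ht : t ≥ Real.exp (-C))
    (hlt : t < δ * (1 + C + Real.log t)) :
    t ≤ (1 + Real.exp (-1)) * δ * (C + Real.log ((1 + Real.exp 1) * δ)) := by
  have he : (0:ℝ) < Real.exp 1 := Real.exp_pos 1
  have ht0 : 0 < t := lt_of_lt_of_le (Real.exp_pos _) ht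
  have hδ0 : 0 < δ := lt_of_lt_of_le (Real.exp_pos _) hδ.le
  set a : ℝ := (1 + Real.exp 1) * δ with ha
  have ha0 : 0 < a := by positivity
  have hratio : 0 < t / a := by positivity
  have hlog : Real.log t ≤ t / a + Real.log a - 1 := by
    have := Real.log_le_sub_one_of_pos hratio
    rw [Real.log_div ht0.ne' ha0.ne'] at this
    linarith
  have hstep : t < δ * (C + Real.log a) + δ * (t / a) := by
    have : δ * (1 + C + Real.log t) ≤ δ * (C + Real.log a) + δ * (t / a) := by
      nlinarith [mul_le_mul_of_nonneg_left hlog hδ0.le]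
    linarith
  have hda : δ * (t / a) = t / (1 + Real.exp 1) := by
    rw [ha]
    field_simp
  rw [hda] at hstep
  have hkey : t * (Real.exp 1 / (1 + Real.exp 1)) < δ * (C + Real.log a) := by
    have h1 : t - t / (1 + Real.exp 1) = t * (Real.exp 1 / (1 + Real.exp 1)) := by
      field_simp
      ring
    linarith [hstep, h1.symm.le, h1.le]
  have hfin : (1 + Real.exp (-1)) = (1 + Real.exp 1) / Real.exp 1 := by
    rw [Real.exp_neg]
    field_simp
    ring
  rw [hfin]
  rw [div_mul_eq_mul_div, div_mul_eq_mul_div, le_div_iff₀ he]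
  calc t * Real.exp 1 = (t * (Real.exp 1 / (1 + Real.exp 1))) * (1 + Real.exp 1) := by
        field_simp
    _ ≤ (δ * (C + Real.log a)) * (1 + Real.exp 1) := by
        nlinarith [hkey]
    _ = (1 + Real.exp 1) * δ * (C + Real.log a) := by ring
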